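/- Let k ≥ 1. The ring ℤ[x_1,…,x_k]^{S_{k−1}} of polynomials in x_1,…,x_k that are symmetric in the first k−1 variables x_1,…,x_{k−1} is a free module over the subring ℤ[x_1,…,x_k]^{S_k} of fully symmetric polynomials, with basis {1, x_k, x_k², …, x_k^{k−1}}. -/

import Mathlib

open MvPolynomial Polynomial

section Aux

variable {m : ℕ}

/-- `f` is a combination of `X (Fin.last m) ^ i`, `i < m+1`, with symmetric coefficients. -/
private def Good (m : ℕ) (f : MvPolynomial (Fin (m+1)) ℤ) : Prop :=
  ∃ c : Fin (m+1) → MvPolynomial (Fin (m+1)) ℤ,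
    (∀ i, (c i).IsSymmetric) ∧ f = ∑ i : Fin (m+1), c i * MvPolynomial.X (Fin.last m) ^ (i : ℕ)

private lemma good_zero : Good m 0 :=
  ⟨0, fun _ => MvPolynomial.IsSymmetric.zero, by simp⟩

private lemma good_add {f g} (hf : Good m f) (hg : Good m g) : Good m (f + g) := by
  obtain ⟨c, hc, rfl⟩ := hf; obtain ⟨d, hd, rfl⟩ := hg
  exact ⟨c + d, fun i => (hc i).add (hd i), by simp [add_mul, Finset.sum_add_distrib]⟩

private lemma good_symm_mul {g f} (hg : g.IsSymmetric) (hf : Good m f) : Good m (g * f) := by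
  obtain ⟨c, hc, rfl⟩ := hf
  exact ⟨fun i => g * c i, fun i => hg.mul (hc i), by
    rw [Finset.mul_sum]; simp [mul_assoc]⟩

private lemma good_symm {g : MvPolynomial (Fin (m+1)) ℤ} (hg : g.IsSymmetric) : Good m g := by
  refine ⟨fun i => if i = 0 then g else 0, fun i => ?_, ?_⟩
  · by_cases h : i = 0 <;> simp [h, hg, MvPolynomial.IsSymmetric.zero]
  · rw [Finset.sum_eq_single 0] <;> simp +contextual

private lemma good_one : Good m 1 := good_symm MvPolynomial.IsSymmetric.one

private lemma good_neg {f} (hf : Good m f) : Good m (-f) := by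
  have := good_symm_mul (m := m) (g := -1)
    (by simpa using (MvPolynomial.IsSymmetric.one (σ := Fin (m+1)) (R := ℤ)).neg) hf
  simpa using this

private lemma good_sub {f g} (hf : Good m f) (hg : Good m g) : Good m (f - g) := by
  simpa [sub_eq_add_neg] using good_add hf (good_neg hg)

private lemma good_sum {α : Type*} {s : Finset α} {F : α → MvPolynomial (Fin (m+1)) ℤ}
    (h : ∀ a ∈ s, Good m (F a)) : Good m (∑ a ∈ s, F a) := by
  classical
  induction s using Finset.induction_on with
  | empty => simpa using good_zero
  | insert _ _ ha ih =>
    rw [Finset.sum_insert ha]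
    exact good_add (h _ (Finset.mem_insert_self _ _))
      (ih fun a has => h _ (Finset.mem_insert_of_mem has))

/-- The universal monic polynomial with roots all the variables. -/
private noncomputable def Puniv (m : ℕ) : Polynomial (MvPolynomial (Fin (m+1)) ℤ) :=
  ∏ j : Fin (m+1), (Polynomial.X - Polynomial.C (MvPolynomial.X j))

private lemma Puniv_coeff_symm (n : ℕ) : ((Puniv m).coeff n).IsSymmetric := by
  intro σ
  have : Polynomial.map (rename (⇑σ)).toRingHom (Puniv m) = Puniv m := by
    unfold Puniv
    rw [Polynomial.map_prod]
    simp only [Polynomial.map_sub, Polynomial.map_X, Polynomial.map_C, AlgHom.toRingHom_eq_coe,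
      RingHom.coe_coe, rename_X]
    exact Fintype.prod_equiv σ _ _ fun j => rfl
  calc rename (⇑σ) ((Puniv m).coeff n)
      = (Polynomial.map (rename (⇑σ)).toRingHom (Puniv m)).coeff n :=
        (Polynomial.coeff_map _ _).symm
    _ = (Puniv m).coeff n := by rw [this]

private lemma Puniv_monic : (Puniv m).Monic :=
  monic_prod_of_monic _ _ fun _ _ => monic_X_sub_C _

private lemma Puniv_natDegree : (Puniv m).natDegree = m + 1 := by
  rw [Puniv, Polynomial.natDegree_prod]
  · simp
  · intro j _; exact (monic_X_sub_C _).ne_zero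

private lemma Puniv_eval : (Puniv m).eval (MvPolynomial.X (Fin.last m)) = 0 := by
  rw [Puniv, Polynomial.eval_prod]
  exact Finset.prod_eq_zero (Finset.mem_univ (Fin.last m)) (by simp)

private lemma key_relation :
    (MvPolynomial.X (Fin.last m) : MvPolynomial (Fin (m+1)) ℤ) ^ (m+1)
      = ∑ n ∈ Finset.range (m+1), (-(Puniv m).coeff n) * MvPolynomial.X (Fin.last m) ^ n := by
  have h := Puniv_eval (m := m)
  rw [Polynomial.eval_eq_sum_range, Puniv_natDegree] at h
  rw [Finset.sum_range_succ] at h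
  have hc : (Puniv m).coeff (m+1) = 1 := by
    have := (Puniv_monic (m := m)).leadingCoeff
    rwa [Polynomial.leadingCoeff, Puniv_natDegree] at this
  rw [hc, one_mul] at h
  have h2 := eq_neg_of_add_eq_zero_right h
  rw [h2, ← Finset.sum_neg_distrib]
  exact Finset.sum_congr rfl fun n _ => by ring

private lemma good_pow :
    ∀ n : ℕ, Good m ((MvPolynomial.X (Fin.last m) : MvPolynomial (Fin (m+1)) ℤ) ^ n) := by
  intro n
  induction n using Nat.strong_induction_on with
  | _ n ih =>
    by_cases h : n < m + 1
    · refine ⟨fun i => if (i : ℕ) = n then 1 else 0, fun i => ?_, ?_⟩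
      · by_cases hi : (i:ℕ) = n <;>
          simp [hi, MvPolynomial.IsSymmetric.one, MvPolynomial.IsSymmetric.zero]
      · rw [Finset.sum_eq_single (⟨n, h⟩ : Fin (m+1))]
        · simp
        · intro b _ hb
          have : (b : ℕ) ≠ n := fun hbn => hb (Fin.ext hbn)
          simp [this]
        · simp
    · push_neg at h
      set t := n - (m+1) with ht
      have hn : n = t + (m+1) := by omega
      have : (MvPolynomial.X (Fin.last m) : MvPolynomial (Fin (m+1)) ℤ) ^ n
          = ∑ j ∈ Finset.range (m+1),
              (-(Puniv m).coeff j) * MvPolynomial.X (Fin.last m) ^ (t + j) := by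
        rw [hn, pow_add, key_relation, Finset.mul_sum]
        exact Finset.sum_congr rfl fun j _ => by ring
      rw [this]
      refine good_sum fun j hj => good_symm_mul (Puniv_coeff_symm j).neg (ih _ ?_)
      have : j < m + 1 := Finset.mem_range.mp hj
      omega

private lemma good_mul {f g} (hf : Good m f) (hg : Good m g) : Good m (f * g) := by
  obtain ⟨c, hc, rfl⟩ := hf; obtain ⟨d, hd, rfl⟩ := hg
  rw [Finset.sum_mul_sum]
  refine good_sum fun i _ => good_sum fun j _ => ?_
  have : c i * MvPolynomial.X (Fin.last m) ^ (i:ℕ) * (d j * MvPolynomial.X (Fin.last m) ^ (j:ℕ))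
      = (c i * d j) * MvPolynomial.X (Fin.last m) ^ ((i:ℕ)+(j:ℕ)) := by ring
  rw [this]; exact good_symm_mul ((hc i).mul (hd j)) (good_pow _)

private noncomputable def Pplus (m : ℕ) : Polynomial (MvPolynomial (Fin (m+1)) ℤ) :=
  ∏ j : Fin (m+1), (Polynomial.X + Polynomial.C (MvPolynomial.X j))

private noncomputable def Rplus (m : ℕ) : Polynomial (MvPolynomial (Fin (m+1)) ℤ) :=
  ∏ j : Fin m, (Polynomial.X + Polynomial.C (MvPolynomial.X (Fin.castSucc j)))

private lemma Pplus_coeff_symm (n : ℕ) : ((Pplus m).coeff n).IsSymmetric := by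
  intro σ
  have : Polynomial.map (rename (⇑σ)).toRingHom (Pplus m) = Pplus m := by
    unfold Pplus
    rw [Polynomial.map_prod]
    simp only [Polynomial.map_add, Polynomial.map_X, Polynomial.map_C, AlgHom.toRingHom_eq_coe,
      RingHom.coe_coe, rename_X]
    exact Fintype.prod_equiv σ _ _ fun j => rfl
  calc rename (⇑σ) ((Pplus m).coeff n)
      = (Polynomial.map (rename (⇑σ)).toRingHom (Pplus m)).coeff n :=
        (Polynomial.coeff_map _ _).symm
    _ = (Pplus m).coeff n := by rw [this]

private lemma Pplus_eq :
    Pplus m = Rplus m * (Polynomial.X + Polynomial.C (MvPolynomial.X (Fin.last m))) := by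
  rw [Pplus, Fin.prod_univ_castSucc]; rfl

private lemma Rplus_monic : (Rplus m).Monic :=
  monic_prod_of_monic _ _ fun _ _ => monic_X_add_C _

private lemma Rplus_natDegree : (Rplus m).natDegree = m := by
  rw [Rplus, Polynomial.natDegree_prod]
  · simp
  · intro j _; exact (monic_X_add_C _).ne_zero

private lemma Rplus_coeff_rec (n : ℕ) :
    (Rplus m).coeff n = (Pplus m).coeff (n+1)
      - MvPolynomial.X (Fin.last m) * (Rplus m).coeff (n+1) := by
  rw [Pplus_eq, mul_add, Polynomial.coeff_add, Polynomial.coeff_mul_X, mul_comm (Rplus m),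
    Polynomial.coeff_C_mul]
  ring

private lemma good_Rplus_coeff (n : ℕ) : Good m ((Rplus m).coeff n) := by
  by_cases hn : n ≤ m
  · have key : ∀ d : ℕ, Good m ((Rplus m).coeff (m - d)) := by
      intro d
      induction d with
      | zero =>
        have h1 := (Rplus_monic (m := m)).coeff_natDegree
        rw [Rplus_natDegree] at h1
        rw [Nat.sub_zero, h1]; exact good_one
      | succ d ih =>
        by_cases hd : m ≤ d
        · have : m - (d+1) = m - d := by omega
          rwa [this]
        · have h1 : m - (d+1) + 1 = m - d := by omega
          rw [Rplus_coeff_rec, h1]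
          exact good_sub (good_symm (Pplus_coeff_symm _))
            (good_mul (by simpa using good_pow (m := m) 1) ih)
    have : n = m - (m - n) := by omega
    rw [this]; exact key _
  · rw [Polynomial.coeff_eq_zero_of_natDegree_lt]
    · exact good_zero
    · rw [Rplus_natDegree]; omega

private lemma Rplus_eq_map : Rplus m
    = Polynomial.map (rename (Fin.castSucc : Fin m → Fin (m+1))).toRingHom
        (∏ j : Fin m, (Polynomial.X + Polynomial.C (MvPolynomial.X j))) := by
  rw [Polynomial.map_prod]
  simp [Rplus]

private lemma rename_esymm_eq_coeff {n : ℕ} (hn : n ≤ m) :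
    rename (Fin.castSucc : Fin m → Fin (m+1)) (esymm (Fin m) ℤ (m - n))
      = (Rplus m).coeff n := by
  rw [Rplus_eq_map, Polynomial.coeff_map]
  have h := MvPolynomial.prod_X_add_C_coeff (σ := Fin m) (R := ℤ) n (by simpa using hn)
  rw [h]
  simp

private lemma good_rename_esymm (i : ℕ) (hi : i ≤ m) :
    Good m (rename (Fin.castSucc : Fin m → Fin (m+1)) (esymm (Fin m) ℤ i)) := by
  have : i = m - (m - i) := by omega
  rw [this, rename_esymm_eq_coeff (by omega)]
  exact good_Rplus_coeff _

private lemma good_aeval (w : Fin m → MvPolynomial (Fin (m+1)) ℤ) (hw : ∀ i, Good m (w i))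
    (q : MvPolynomial (Fin m) ℤ) : Good m (aeval w q) := by
  induction q using MvPolynomial.induction_on with
  | C r => rw [MvPolynomial.aeval_C]; exact good_symm (MvPolynomial.IsSymmetric.C _)
  | add p q hp hq => rw [map_add]; exact good_add hp hq
  | mul_X p i hp => rw [map_mul, MvPolynomial.aeval_X]; exact good_mul hp (hw i)

private lemma good_rename_symm {g : MvPolynomial (Fin m) ℤ} (hg : g.IsSymmetric) :
    Good m (rename (Fin.castSucc : Fin m → Fin (m+1)) g) := by
  obtain ⟨q, hq⟩ := esymmAlgHom_fin_surjective (R := ℤ) (le_refl m) ⟨g, hg⟩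
  have hg' : aeval (fun i : Fin m => esymm (Fin m) ℤ (i + 1)) q = g := by
    rw [← esymmAlgHom_apply, hq]
  have : rename (Fin.castSucc : Fin m → Fin (m+1)) g
      = aeval (fun i : Fin m =>
          rename (Fin.castSucc : Fin m → Fin (m+1)) (esymm (Fin m) ℤ (i + 1))) q := by
    rw [← hg', ← AlgHom.comp_apply, comp_aeval]
  rw [this]
  exact good_aeval _ (fun i => good_rename_esymm _ (by omega)) q

/-- Extension of a permutation of `Fin m` to `Fin (m+1)` fixing `0`. -/
private def tau (σ' : Equiv.Perm (Fin m)) : Equiv.Perm (Fin (m+1)) :=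
  (_root_.finSuccEquiv m).symm.permCongr σ'.optionCongr

private lemma tau_zero (σ' : Equiv.Perm (Fin m)) : tau σ' 0 = 0 := by
  simp [tau, Equiv.permCongr_apply]

private lemma tau_succ (σ' : Equiv.Perm (Fin m)) (j : Fin m) :
    tau σ' (Fin.succ j) = Fin.succ (σ' j) := by
  simp [tau, Equiv.permCongr_apply]

private lemma finSuccEquiv_rename_tau (σ' : Equiv.Perm (Fin m)) (p : MvPolynomial (Fin (m+1)) ℤ) :
    MvPolynomial.finSuccEquiv ℤ m (rename (⇑(tau σ')) p)
      = Polynomial.map ((rename (⇑σ') : MvPolynomial (Fin m) ℤ →ₐ[ℤ] _) : _ →+* _)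
          (MvPolynomial.finSuccEquiv ℤ m p) := by
  have h : ((Polynomial.mapAlgHom (rename (⇑σ'))).comp (MvPolynomial.finSuccEquiv ℤ m).toAlgHom)
      = (MvPolynomial.finSuccEquiv ℤ m).toAlgHom.comp (rename (⇑(tau σ'))) := by
    apply MvPolynomial.algHom_ext
    intro i
    refine Fin.cases ?_ (fun j => ?_) i
    · simp [tau_zero, finSuccEquiv_X_zero, Polynomial.coe_mapAlgHom]
    · simp [tau_succ, finSuccEquiv_X_succ, Polynomial.coe_mapAlgHom]
  have := congrArg (fun F => F p) h.symm
  simpa [Polynomial.coe_mapAlgHom] using this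

private lemma finSuccEquiv_rename_succ (g : MvPolynomial (Fin m) ℤ) :
    MvPolynomial.finSuccEquiv ℤ m (rename Fin.succ g) = Polynomial.C g := by
  induction g using MvPolynomial.induction_on with
  | C r => simp [MvPolynomial.finSuccEquiv_apply]
  | add p q hp hq => simp [map_add, hp, hq]
  | mul_X p i hp => simp [map_mul, rename_X, finSuccEquiv_X_succ, hp]

private lemma vandermonde_unique (d : Fin (m+1) → MvPolynomial (Fin (m+1)) ℤ)
    (hsym : ∀ i, (d i).IsSymmetric)
    (h0 : ∑ i : Fin (m+1), d i * MvPolynomial.X (Fin.last m) ^ (i : ℕ) = 0) : d = 0 := by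
  have hj : ∀ j : Fin (m+1),
      ∑ i : Fin (m+1), MvPolynomial.X j ^ (i:ℕ) * d i = 0 := by
    intro j
    have h := congrArg
      (rename (Equiv.swap (Fin.last m) j) : MvPolynomial (Fin (m+1)) ℤ →ₐ[ℤ] _) h0
    simp only [map_sum, map_mul, map_pow, rename_X, map_zero] at h
    rw [Equiv.swap_apply_left] at h
    have hd : ∀ i, rename (⇑(Equiv.swap (Fin.last m) j)) (d i) = d i := fun i => hsym i _
    simp only [hd] at h
    simpa [mul_comm] using h
  set V := Matrix.vandermonde
    (fun j : Fin (m+1) => (MvPolynomial.X j : MvPolynomial (Fin (m+1)) ℤ)) with hV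
  have hmul : V.mulVec d = 0 := by
    funext j
    simpa [Matrix.mulVec, dotProduct, hV, Matrix.vandermonde] using hj j
  have h2 : V.det • d = 0 := by
    have := congrArg (fun v => (Matrix.adjugate V).mulVec v) hmul
    simpa [Matrix.mulVec_mulVec, Matrix.adjugate_mul, Matrix.smul_mulVec,
      Matrix.one_mulVec] using this
  have hdet : V.det ≠ 0 := by
    rw [hV, Matrix.det_vandermonde]
    apply Finset.prod_ne_zero_iff.mpr
    intro i _
    apply Finset.prod_ne_zero_iff.mpr
    intro j hj'
    have : i ≠ j := by
      rintro rfl; simp [Finset.mem_Ioi] at hj'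
    exact sub_ne_zero.mpr fun h => this (X_injective h).symm
  funext i
  have := congrFun h2 i
  simp only [Pi.smul_apply, smul_eq_mul, Pi.zero_apply] at this
  exact (mul_eq_zero.mp this).resolve_left hdet

end Aux

/-- For `k = m+1 ≥ 1`, the ring of polynomials in `x_1,…,x_k` that are
symmetric in the first `k-1` variables is a free module over the ring of fully symmetric
polynomials, with basis `{1, x_k, …, x_k^{k-1}}`: every such polynomial is uniquely a
combination `Σ c_i · x_k^i` with fully symmetric coefficients `c_i`. -/
theorem partially_symmetric_free_over_symmetric (m : ℕ)
    (f : MvPolynomial (Fin (m + 1)) ℤ)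
    (hf : ∀ σ : Equiv.Perm (Fin (m + 1)), σ (Fin.last m) = Fin.last m →
      rename (σ : Fin (m + 1) → Fin (m + 1)) f = f) :
    ∃! c : Fin (m + 1) → MvPolynomial (Fin (m + 1)) ℤ,
      (∀ i, (c i).IsSymmetric) ∧
      f = ∑ i : Fin (m + 1), c i * X (Fin.last m) ^ (i : ℕ) := by
  -- Existence: transport through `finSuccEquiv` after rotating the last variable to position 0.
  set e : Equiv.Perm (Fin (m+1)) := finRotate (m+1) with he
  have he_last : e (Fin.last m) = 0 := by
    rw [he, finRotate_succ_apply, Fin.last_add_one]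
  have he_symm0 : e.symm 0 = Fin.last m := by
    rw [← he_last, Equiv.symm_apply_apply]
  set F := MvPolynomial.finSuccEquiv ℤ m (rename (⇑e) f) with hF
  have hFsym : ∀ n, (F.coeff n).IsSymmetric := by
    intro n σ'
    have hτ : rename (⇑(tau σ')) (rename (⇑e) f) = rename (⇑e) f := by
      set σ : Equiv.Perm (Fin (m+1)) := e.trans ((tau σ').trans e.symm) with hσ
      have hσlast : σ (Fin.last m) = Fin.last m := by
        simp only [hσ, Equiv.trans_apply, he_last, tau_zero, he_symm0]
      have hcomp : (⇑(tau σ')) ∘ (⇑e) = (⇑e) ∘ (⇑σ) := by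
        funext x
        simp [hσ, Equiv.trans_apply]
      rw [rename_rename, hcomp, ← rename_rename, hf σ hσlast]
    calc rename (⇑σ') (F.coeff n)
        = (Polynomial.map ((rename (⇑σ') : MvPolynomial (Fin m) ℤ →ₐ[ℤ] _) : _ →+* _) F).coeff n :=
          (Polynomial.coeff_map _ _).symm
      _ = F.coeff n := by rw [hF, ← finSuccEquiv_rename_tau, hτ]
  have hdecomp : f = ∑ n ∈ Finset.range (F.natDegree + 1),
      rename (Fin.castSucc : Fin m → Fin (m+1)) (F.coeff n)
        * MvPolynomial.X (Fin.last m) ^ n := by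
    have hsucc : (⇑(e.symm)) ∘ (Fin.succ : Fin m → Fin (m+1)) = Fin.castSucc := by
      funext j
      apply e.injective
      rw [Function.comp_apply, Equiv.apply_symm_apply, he, finRotate_succ_apply,
        Fin.coeSucc_eq_succ]
    have h1 : f = rename (⇑(e.symm)) ((MvPolynomial.finSuccEquiv ℤ m).symm F) := by
      rw [hF, AlgEquiv.symm_apply_apply, rename_rename]
      have : (⇑(e.symm)) ∘ (⇑e) = id := by
        funext x; simp
      rw [this, rename_id, AlgHom.id_apply]
    have h2 : F = ∑ n ∈ Finset.range (F.natDegree + 1),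
        Polynomial.C (F.coeff n) * Polynomial.X ^ n := F.as_sum_range_C_mul_X_pow
    rw [h1]
    conv_lhs => rw [h2]
    rw [map_sum, map_sum]
    refine Finset.sum_congr rfl fun n _ => ?_
    have hC : (MvPolynomial.finSuccEquiv ℤ m).symm (Polynomial.C (F.coeff n))
        = rename Fin.succ (F.coeff n) := by
      rw [← finSuccEquiv_rename_succ, AlgEquiv.symm_apply_apply]
    have hX : (MvPolynomial.finSuccEquiv ℤ m).symm Polynomial.X
        = MvPolynomial.X (0 : Fin (m+1)) := by
      rw [← finSuccEquiv_X_zero (R := ℤ) (n := m), AlgEquiv.symm_apply_apply]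
    rw [map_mul, map_pow, hC, hX, map_mul, map_pow, rename_rename, hsucc, rename_X, he_symm0]
  have hex : Good m f := by
    rw [hdecomp]
    exact good_sum fun n _ => good_mul (good_rename_symm (hFsym n)) (good_pow n)
  obtain ⟨c, hc, hrepr⟩ := hex
  refine ⟨c, ⟨hc, hrepr⟩, ?_⟩
  rintro y ⟨hy, hyrepr⟩
  have hzero : ∑ i : Fin (m+1), (y i - c i) * MvPolynomial.X (Fin.last m) ^ (i : ℕ) = 0 := by
    simp only [sub_mul, Finset.sum_sub_distrib]
    rw [← hyrepr, ← hrepr, sub_self]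
  have := vandermonde_unique (fun i => y i - c i) (fun i => (hy i).sub (hc i)) hzero
  funext i
  have hi := congrFun this i
  simpa [sub_eq_zero] using hi
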